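/- Let p(X) ∈ F[X] be any polynomial. Then Σ_{x ∈ H} p(x) = 0 if and only if there exists a polynomial U(X) ∈ F[X] such that U(g·X) − U(X) ≡ p(X) (mod X^n − 1), i.e. the polynomial U(g·X) − U(X) − p(X) is divisible by X^n − 1. -/

import Mathlib

open Polynomial

lemma coboundary_aux {F : Type*} [Field F] (n : ℕ) (hn0 : n ≠ 0)
    (g : F) (hg : IsPrimitiveRoot g n) (p : F[X]) :
    (∑ i ∈ Finset.range n, p.eval (g ^ i)) = n * ((p %ₘ (X ^ n - 1)).coeff 0) := by
  have hqm : (X ^ n - 1 : F[X]).Monic := by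
    simpa using monic_X_pow_sub_C (1 : F) hn0
  have hgn : g ^ n = 1 := hg.pow_eq_one
  set r := p %ₘ (X ^ n - 1) with hr
  have hq0 : ∀ i : ℕ, eval (g ^ i) (X ^ n - 1 : F[X]) = 0 := by
    intro i
    rw [eval_sub, eval_pow, eval_X, eval_one, ← pow_mul, mul_comm i n, pow_mul, hgn,
      one_pow, sub_self]
  have hpr : ∀ i, p.eval (g ^ i) = r.eval (g ^ i) := by
    intro i
    conv_lhs => rw [← modByMonic_add_div p (X ^ n - 1)]
    rw [eval_add, eval_mul, hq0, zero_mul, add_zero]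
  have hrdeg : r.natDegree < n := by
    rcases eq_or_ne r 0 with h | h
    · simp [h, Nat.pos_of_ne_zero hn0]
    · have := degree_modByMonic_lt p hqm
      rw [← hr] at this
      have hd : (X ^ n - 1 : F[X]).degree = n := by
        simpa using degree_X_pow_sub_C (Nat.pos_of_ne_zero hn0) (1 : F)
      rw [hd] at this
      exact (natDegree_lt_iff_degree_lt h).2 this
  calc ∑ i ∈ Finset.range n, p.eval (g ^ i)
      = ∑ i ∈ Finset.range n, ∑ j ∈ Finset.range n, r.coeff j * (g ^ j) ^ i := by
        refine Finset.sum_congr rfl fun i _ => ?_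
        rw [hpr i, eval_eq_sum_range' hrdeg]
        refine Finset.sum_congr rfl fun j _ => ?_
        rw [← pow_mul, ← pow_mul, mul_comm j i, mul_comm]
    _ = ∑ j ∈ Finset.range n, r.coeff j * ∑ i ∈ Finset.range n, (g ^ j) ^ i := by
        rw [Finset.sum_comm]; simp [Finset.mul_sum]
    _ = n * r.coeff 0 := by
        rw [Finset.sum_eq_single 0]
        · simp [mul_comm]
        · intro j hj hj0
          have hne : g ^ j ≠ 1 := hg.pow_ne_one_of_pos_of_lt hj0
            (Finset.mem_range.1 hj)
          rw [geom_sum_eq hne, ← pow_mul, mul_comm j n, pow_mul, hgn, one_pow]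
          simp
        · intro h; simp at h; omega

theorem coboundary_sumcheck {F : Type*} [Field F] (n : ℕ) (hn : (n : F) ≠ 0)
    (g : F) (hg : IsPrimitiveRoot g n) (p : F[X]) :
    (∑ i ∈ Finset.range n, p.eval (g ^ i)) = 0 ↔
      ∃ U : F[X], (X ^ n - 1 : F[X]) ∣ (U.comp (C g * X) - U - p) := by
  have hn0 : n ≠ 0 := by rintro rfl; simp at hn
  have hqm : (X ^ n - 1 : F[X]).Monic := by
    simpa using monic_X_pow_sub_C (1 : F) hn0
  have hgn : g ^ n = 1 := hg.pow_eq_one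
  set r := p %ₘ (X ^ n - 1) with hr
  have hrdeg : r.natDegree < n := by
    rcases eq_or_ne r 0 with h | h
    · simp [h, Nat.pos_of_ne_zero hn0]
    · have := degree_modByMonic_lt p hqm
      rw [← hr] at this
      have hd : (X ^ n - 1 : F[X]).degree = n := by
        simpa using degree_X_pow_sub_C (Nat.pos_of_ne_zero hn0) (1 : F)
      rw [hd] at this
      exact (natDegree_lt_iff_degree_lt h).2 this
  constructor
  · intro h
    have h0 : r.coeff 0 = 0 := by
      have := coboundary_aux n hn0 g hg p
      rw [h, ← hr] at this
      field_simp at this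
      exact (mul_eq_zero.1 this.symm).resolve_left hn
    refine ⟨∑ j ∈ Finset.range n, C (r.coeff j / (g ^ j - 1)) * X ^ j, ?_⟩
    have hUr : (∑ j ∈ Finset.range n, C (r.coeff j / (g ^ j - 1)) * X ^ j).comp (C g * X)
        - (∑ j ∈ Finset.range n, C (r.coeff j / (g ^ j - 1)) * X ^ j) = r := by
      rw [Polynomial.sum_comp]
      rw [← Finset.sum_sub_distrib]
      have : ∀ j ∈ Finset.range n,
          (C (r.coeff j / (g ^ j - 1)) * X ^ j).comp (C g * X)
          - C (r.coeff j / (g ^ j - 1)) * X ^ j = C (r.coeff j) * X ^ j := by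
        intro j hj
        rw [mul_comp, C_comp, X_pow_comp, mul_pow, ← C_pow]
        rcases eq_or_ne j 0 with rfl | hj0
        · simp [h0]
        · have hne : g ^ j ≠ 1 := hg.pow_ne_one_of_pos_of_lt hj0
            (Finset.mem_range.1 hj)
          have hne' : g ^ j - 1 ≠ 0 := sub_ne_zero.2 hne
          rw [← mul_assoc, ← C_mul, ← sub_mul, ← C_sub]
          congr 2
          field_simp
      rw [Finset.sum_congr rfl this]
      conv_rhs => rw [r.as_sum_range' n hrdeg]
      simp [Finset.sum_congr, Polynomial.C_mul_X_pow_eq_monomial]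
    rw [hUr]
    have : r - p = -((X ^ n - 1) * (p /ₘ (X ^ n - 1))) := by
      have := modByMonic_add_div p (X ^ n - 1)
      rw [← hr] at this
      linear_combination this
    rw [this]
    exact dvd_neg.mpr (dvd_mul_right _ _)
  · rintro ⟨U, d, hd⟩
    have hp : ∀ i : ℕ, p.eval (g ^ i) = U.eval (g ^ (i + 1)) - U.eval (g ^ i) := by
      intro i
      have h1 := congrArg (eval (g ^ i)) hd
      have h2 : ((g : F) ^ i) ^ n - 1 = 0 := by
        rw [← pow_mul, mul_comm i n, pow_mul, hgn, one_pow, sub_self]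
      simp only [eval_sub, eval_comp, eval_mul, eval_C, eval_X, eval_pow, eval_one] at h1
      rw [h2] at h1
      have h3 : g * g ^ i = g ^ (i + 1) := by ring
      rw [h3, zero_mul] at h1
      linear_combination -h1
    calc ∑ i ∈ Finset.range n, p.eval (g ^ i)
        = ∑ i ∈ Finset.range n, (U.eval (g ^ (i + 1)) - U.eval (g ^ i)) :=
          Finset.sum_congr rfl fun i _ => hp i
      _ = U.eval (g ^ n) - U.eval (g ^ 0) := by exact Finset.sum_range_sub (fun i => U.eval (g ^ i)) n
      _ = 0 := by rw [hgn]; simp
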